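/- (Proposition 3.3.5.) For all integers n ≥ 6 and m ≥ 0, there exist real polynomials p and q, each of degree at most (n+m)², such that for all x ∈ [−2^m, 2^m] one has q(x) ≥ 1 and | |x| − p(x)/q(x) | ≤ 2^{−n}. -/

import Mathlib

set_option maxHeartbeats 1000000

open Finset Polynomial Real



noncomputable def nxi (M : ℕ) : ℝ := 1 - 1/M

lemma nxi_nonneg {M : ℕ} (hM : 6 ≤ M) : 0 ≤ nxi M := by
  have h1 : (6:ℝ) ≤ M := by exact_mod_cast hM
  have : 1/(M:ℝ) ≤ 1 := by rw [div_le_one (by linarith)]; linarith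
  simp only [nxi]; linarith

lemma nxi_le_one {M : ℕ} (hM : 6 ≤ M) : nxi M ≤ 1 := by
  have h1 : (6:ℝ) ≤ M := by exact_mod_cast hM
  have : 0 ≤ 1/(M:ℝ) := by positivity
  simp only [nxi]; linarith

lemma nxi_bern {M : ℕ} (hM : 6 ≤ M) (j : ℕ) : 1 - (j:ℝ)/M ≤ nxi M ^ j := by
  have h1 : (6:ℝ) ≤ M := by exact_mod_cast hM
  have hm : (0:ℝ) < M := by linarith
  have hm1 : 1/(M:ℝ) ≤ 1 := by rw [div_le_one hm]; linarith
  have h := one_add_mul_le_pow (a := -(1/(M:ℝ))) (by linarith) j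
  simp only [nxi]
  calc 1 - (j:ℝ)/M = 1 + j * (-(1/M)) := by ring
  _ ≤ (1 + -(1/M))^j := h
  _ = (1 - 1/(M:ℝ))^j := by ring_nf

lemma nxi_pow_le_exp {M : ℕ} (hM : 6 ≤ M) (K : ℕ) : nxi M ^ K ≤ Real.exp (-(K/M)) := by
  have h1 : (6:ℝ) ≤ M := by exact_mod_cast hM
  have hx : nxi M ≤ Real.exp (-(1/M)) := by
    have := Real.add_one_le_exp (-(1/(M:ℝ)))
    simp only [nxi]; linarith
  calc nxi M ^ K ≤ Real.exp (-(1/M)) ^ K :=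
        pow_le_pow_left₀ (nxi_nonneg hM) hx K
  _ = Real.exp (K * (-(1/M))) := (Real.exp_nat_mul _ K).symm
  _ = Real.exp (-(K/M)) := by ring_nf

lemma NI : ∀ K, 5 ≤ K → (2:ℝ)^(K+2) ≤ Real.exp 1 ^ K := by
  intro K hK
  induction K, hK using Nat.le_induction with
  | base =>
    have h := Real.exp_one_gt_d9
    calc (2:ℝ)^7 = 128 := by norm_num
    _ ≤ 2.7182818283^5 := by norm_num
    _ ≤ Real.exp 1 ^ 5 := by
        apply pow_le_pow_left₀ (by norm_num) (le_of_lt h)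
  | succ K hK ih =>
    have h2 : (2:ℝ) ≤ Real.exp 1 := by
      have := Real.exp_one_gt_d9; linarith
    calc (2:ℝ)^(K+1+2) = 2^(K+2) * 2 := by ring
    _ ≤ Real.exp 1 ^ K * Real.exp 1 := by
        apply mul_le_mul ih h2 (by norm_num) (by positivity)
    _ = Real.exp 1 ^ (K+1) := by ring

lemma eight_mul_le_two_pow : ∀ M, 6 ≤ M → 8 * M ≤ 2^M := by
  intro M hM
  induction M, hM using Nat.le_induction with
  | base => norm_num
  | succ M hM ih =>
    have h8 : 8 ≤ 2^M := le_trans (by omega) ih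
    calc 8*(M+1) = 8*M + 8 := by ring
    _ ≤ 2^M + 2^M := by omega
    _ = 2^(M+1) := by ring

lemma fact_le_pow : ∀ (M w : ℕ), 1 ≤ w → w ≤ M → Nat.factorial w ≤ M^(w-1) := by
  intro M w hw1 hwM
  induction w with
  | zero => omega
  | succ w ih =>
    rcases Nat.eq_or_lt_of_le hw1 with h|h
    · have hw0 : w = 0 := by omega
      subst hw0; simp [Nat.factorial]
    · have hw : 1 ≤ w := by omega
      have := ih hw (by omega)
      calc Nat.factorial (w+1) = (w+1) * Nat.factorial w := rfl
      _ ≤ M * M^(w-1) := Nat.mul_le_mul (by omega) this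
      _ = M^w := by rw [← pow_succ']; congr 1; omega
      _ = M^(w+1-1) := by norm_num

lemma msq_aux {M : ℕ} (hM : 6 ≤ M) : M*(M-1) + M = M^2 := by
  rcases M with _|K
  · omega
  · simp [Nat.succ_sub_one]; ring

lemma N0 {M : ℕ} (hM : 6 ≤ M) : 2 * Real.exp (1 - (M:ℝ)) ≤ 1/2^M := by
  have hM1 : (1:ℕ) ≤ M := by omega
  have key : (2:ℝ)^(M+1) ≤ Real.exp ((M:ℝ)-1) := by
    have h := NI (M-1) (by omega)
    have e1 : (M-1) + 2 = M + 1 := by omega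
    have e2 : Real.exp 1 ^ (M-1) = Real.exp ((M:ℝ)-1) := by
      rw [← Real.exp_nat_mul]
      congr 1
      push_cast [Nat.cast_sub hM1]
      ring
    rw [e1, e2] at h; exact h
  have hpos : (0:ℝ) < Real.exp ((M:ℝ)-1) := Real.exp_pos _
  have h2 : Real.exp (1-(M:ℝ)) = (Real.exp ((M:ℝ)-1))⁻¹ := by
    rw [← Real.exp_neg]; congr 1; ring
  rw [h2, show (2:ℝ) * (Real.exp ((M:ℝ)-1))⁻¹ = 2 / Real.exp ((M:ℝ)-1) from by ring,
    div_le_div_iff₀ hpos (by positivity)]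
  calc 2 * 2^M = (2:ℝ)^(M+1) := by ring
  _ ≤ Real.exp ((M:ℝ)-1) := key
  _ = 1 * Real.exp ((M:ℝ)-1) := by ring

lemma exp_bound_of_le {M K : ℕ} (hM : 6 ≤ M) (hK : M*(M-1) ≤ K) :
    nxi M ^ K ≤ Real.exp (1 - (M:ℝ)) := by
  refine le_trans (nxi_pow_le_exp hM K) ?_
  apply Real.exp_le_exp.mpr
  have hMp : (0:ℝ) < M := by positivity
  rw [neg_le, neg_sub, le_div_iff₀ hMp]
  have : ((M*(M-1) : ℕ) : ℝ) ≤ (K:ℝ) := by exact_mod_cast hK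
  have hcast : ((M*(M-1) : ℕ) : ℝ) = (M:ℝ) * ((M:ℝ)-1) := by
    push_cast [Nat.cast_sub (show (1:ℕ) ≤ M by omega)]; ring
  nlinarith [this, hcast]

lemma N1 {M d : ℕ} (hM : 6 ≤ M) (hd : M^2 - 1 ≤ d) :
    2 * nxi M ^ (d-1) ≤ 1/2^M := by
  have haux := msq_aux hM
  have h1 : M*(M-1) ≤ d - 1 := by omega
  have := exp_bound_of_le hM h1
  have := N0 hM
  linarith

lemma N3 {M d w : ℕ} (hM : 6 ≤ M) (hd : M^2 - 1 ≤ d) (hw1 : 1 ≤ w) (hw2 : w ≤ M-2) :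
    4 * nxi M ^ (d-1-w) * ((Nat.factorial w : ℝ) / (M:ℝ)^w) ≤ 1/2^M := by
  have haux := msq_aux hM
  have h1 : M*(M-1) ≤ d - 1 - w := by omega
  have hexp := exp_bound_of_le hM h1
  have hN0 := N0 hM
  have hMp : (0:ℝ) < M := by positivity
  have hfac : (Nat.factorial w : ℝ) / (M:ℝ)^w ≤ 1/M := by
    have h : (Nat.factorial w : ℝ) ≤ (M:ℝ)^(w-1) := by
      exact_mod_cast fact_le_pow M w hw1 (by omega)
    rw [div_le_div_iff₀ (by positivity) hMp]
    calc (Nat.factorial w : ℝ) * M ≤ (M:ℝ)^(w-1) * M := by nlinarith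
    _ = (M:ℝ)^w := by rw [← pow_succ]; congr 1; omega
    _ = 1 * (M:ℝ)^w := by ring
  have hM6 : (6:ℝ) ≤ M := by exact_mod_cast hM
  have hfac6 : (Nat.factorial w : ℝ) / (M:ℝ)^w ≤ 1/6 := by
    refine le_trans hfac ?_
    rw [div_le_div_iff₀ hMp (by norm_num)]; linarith
  have hxp : (0:ℝ) ≤ nxi M ^ (d-1-w) := pow_nonneg (nxi_nonneg hM) _
  have hfp : (0:ℝ) ≤ (Nat.factorial w : ℝ) / (M:ℝ)^w := by positivity
  calc 4 * nxi M ^ (d-1-w) * ((Nat.factorial w : ℝ) / (M:ℝ)^w)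
      ≤ 4 * Real.exp (1 - (M:ℝ)) * (1/6) := by
        apply mul_le_mul _ hfac6 hfp (by positivity)
        nlinarith [Real.exp_pos (1 - (M:ℝ))]
  _ ≤ 2 * Real.exp (1 - (M:ℝ)) := by nlinarith [Real.exp_pos (1 - (M:ℝ))]
  _ ≤ 1/2^M := hN0

lemma L4 {M : ℕ} (hM : 6 ≤ M) :
    2^(M+2) * (Nat.factorial (M-1) * Nat.factorial M) ≤ Nat.factorial (2*M-1) := by
  have hcb : 2^(M+3) ≤ Nat.centralBinom M := by
    have h4 := Nat.four_pow_lt_mul_centralBinom M (by omega)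
    have h8 := eight_mul_le_two_pow M hM
    have : M * 2^(M+3) ≤ 4^M := by
      calc M * 2^(M+3) = (8*M) * 2^M := by ring
      _ ≤ 2^M * 2^M := Nat.mul_le_mul_right _ h8
      _ = 4^M := by rw [← mul_pow]; norm_num
    have hlt : M * 2^(M+3) < M * Nat.centralBinom M := lt_of_le_of_lt this h4
    exact le_of_lt (Nat.lt_of_mul_lt_mul_left hlt)
  have hfMM : Nat.centralBinom M * Nat.factorial M * Nat.factorial M = Nat.factorial (2*M) := by
    have := Nat.choose_mul_factorial_mul_factorial (show M ≤ 2*M by omega)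
    rw [Nat.centralBinom]
    convert this using 3
    omega
  have h2M : Nat.factorial (2*M) = (2*M) * Nat.factorial (2*M-1) := by
    obtain ⟨K, hK⟩ : ∃ K, 2*M = K+1 := ⟨2*M-1, by omega⟩
    rw [hK]; simp [Nat.factorial_succ]
  have hmul : 2*M * (2^(M+2) * (Nat.factorial (M-1) * Nat.factorial M)) ≤ 2*M * Nat.factorial (2*M-1) := by
    calc 2*M * (2^(M+2) * (Nat.factorial (M-1) * Nat.factorial M))
      = 2^(M+3) * (M * Nat.factorial (M-1)) * Nat.factorial M := by ring
    _ = 2^(M+3) * Nat.factorial M * Nat.factorial M := by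
      rw [Nat.mul_factorial_pred (by omega)]
    _ ≤ Nat.centralBinom M * Nat.factorial M * Nat.factorial M := by
      have := Nat.mul_le_mul_right (Nat.factorial M) (Nat.mul_le_mul_right (Nat.factorial M) hcb)
      exact this
    _ = Nat.factorial (2*M) := hfMM
    _ = 2*M * Nat.factorial (2*M-1) := h2M
  exact Nat.le_of_mul_le_mul_left hmul (by omega)

lemma N2 {M : ℕ} (hM : 6 ≤ M) :
    ∏ t ∈ range (M-1), ((1+t:ℝ)/((2*M:ℝ)-(1+t))) ≤ 1/2^(M+2) := by
  have hden : ∀ t ∈ range (M-1), ((2*M:ℝ)-(1+t)) = ((2*M-(1+t) : ℕ) : ℝ) := by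
    intro t ht
    simp only [mem_range] at ht
    rw [Nat.cast_sub (by omega)]
    push_cast; ring
  have hnum : ∏ t ∈ range (M-1), ((1+t:ℝ)) = ((Nat.factorial (M-1) : ℕ) : ℝ) := by
    rw [← Finset.prod_range_add_one_eq_factorial (M-1), Nat.cast_prod]
    apply Finset.prod_congr rfl; intros; push_cast; ring
  have hdenval : ∏ t ∈ range (M-1), ((2*M:ℝ)-(1+t)) = ((2*M-1).descFactorial (M-1) : ℝ) := by
    rw [Finset.prod_congr rfl hden, ← Nat.cast_prod]
    congr 1
    rw [Nat.descFactorial_eq_prod_range]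
    apply Finset.prod_congr rfl; intros; omega
  rw [Finset.prod_div_distrib, hnum, hdenval]
  have hkey : 2^(M+2) * Nat.factorial (M-1) ≤ (2*M-1).descFactorial (M-1) := by
    have hfd := Nat.factorial_mul_descFactorial (show M-1 ≤ 2*M-1 by omega)
    have he : 2*M-1-(M-1) = M := by omega
    rw [he] at hfd
    have hmul : Nat.factorial M * (2^(M+2) * Nat.factorial (M-1)) ≤ Nat.factorial M * ((2*M-1).descFactorial (M-1)) := by
      calc Nat.factorial M * (2^(M+2) * Nat.factorial (M-1))
          = 2^(M+2) * (Nat.factorial (M-1) * Nat.factorial M) := by ring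
      _ ≤ Nat.factorial (2*M-1) := L4 hM
      _ = Nat.factorial M * (2*M-1).descFactorial (M-1) := hfd.symm
    exact Nat.le_of_mul_le_mul_left hmul (Nat.factorial_pos M)
  have hdfpos : 0 < ((2*M-1).descFactorial (M-1)) :=
    lt_of_lt_of_le (by positivity) hkey
  rw [div_le_div_iff₀ (by exact_mod_cast hdfpos) (by positivity)]
  have : ((2^(M+2) * Nat.factorial (M-1) : ℕ) : ℝ) ≤ (((2*M-1).descFactorial (M-1) : ℕ) : ℝ) := by
    exact_mod_cast hkey
  push_cast at this ⊢
  linarith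

lemma nxi_pos {M : ℕ} (hM : 6 ≤ M) : 0 < nxi M := by
  have h1 : (6:ℝ) ≤ M := by exact_mod_cast hM
  have : 1/(M:ℝ) ≤ 1/6 := by
    apply div_le_div_of_nonneg_left (by norm_num) (by norm_num) h1
  simp only [nxi]; linarith

noncomputable def Bf (M d : ℕ) (s : ℝ) : ℝ := ∏ k ∈ range d, (s + nxi M ^ k)
noncomputable def Ef (M d : ℕ) (s : ℝ) : ℝ := ∏ k ∈ range d, (s - nxi M ^ k)

lemma cover {ξ : ℝ} : ∀ N (s : ℝ), ξ^(N+1) ≤ s → s ≤ 1 →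
    ∃ i ≤ N, ξ^(i+1) ≤ s ∧ s ≤ ξ^i := by
  intro N
  induction N with
  | zero => intro s ha hb; exact ⟨0, le_refl 0, ha, by simpa using hb⟩
  | succ N ih =>
    intro s ha hb
    by_cases h : ξ^(N+1) ≤ s
    · obtain ⟨i, hi, h1, h2⟩ := ih s h hb; exact ⟨i, by omega, h1, h2⟩
    · exact ⟨N+1, le_refl _, ha, le_of_lt (not_le.mp h)⟩

lemma factor_bound {M : ℕ} (hM : 6 ≤ M) {s : ℝ} {i j : ℕ} (hj1 : 1 ≤ j) (hj2 : j ≤ M-1)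
    (hs1 : nxi M ^ (i+1) ≤ s) (hs2 : s ≤ nxi M ^ i) :
    |s - nxi M ^ (i+j)| ≤ ((j:ℝ)/((2*M:ℝ)-j)) * (s + nxi M ^ (i+j)) := by
  have hxn := nxi_nonneg hM
  have hx1 := nxi_le_one hM
  have hM6 : (6:ℝ) ≤ M := by exact_mod_cast hM
  have hjM : (j:ℝ) ≤ (M:ℝ) - 1 := by
    have : ((j:ℕ):ℝ) ≤ ((M-1:ℕ):ℝ) := by exact_mod_cast hj2
    rwa [Nat.cast_sub (by omega), Nat.cast_one] at this
  have ha : nxi M ^ (i+j) ≤ s :=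
    le_trans (pow_le_pow_of_le_one hxn hx1 (by omega)) hs1
  have hann : (0:ℝ) ≤ nxi M ^ (i+j) := pow_nonneg hxn _
  rw [abs_of_nonneg (by linarith)]
  have hden : (0:ℝ) < (2*M:ℝ) - j := by linarith
  rw [div_mul_eq_mul_div, le_div_iff₀ hden]
  -- key : (M - j) * s ≤ M * ξ^(i+j)
  have hbern : 1 - (j:ℝ)/M ≤ nxi M ^ j := nxi_bern hM j
  have hMp : (0:ℝ) < M := by linarith
  have hb2 : (M:ℝ) - j ≤ (M:ℝ) * nxi M ^ j := by
    have := mul_le_mul_of_nonneg_left hbern (le_of_lt hMp)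
    calc (M:ℝ) - j = M * (1 - (j:ℝ)/M) := by field_simp
    _ ≤ M * nxi M ^ j := this
  have hkey : ((M:ℝ) - j) * s ≤ (M:ℝ) * nxi M ^ (i+j) := by
    have hxin : (0:ℝ) ≤ nxi M ^ i := pow_nonneg hxn _
    calc ((M:ℝ) - j) * s ≤ ((M:ℝ) - j) * nxi M ^ i := by nlinarith
    _ ≤ ((M:ℝ) * nxi M ^ j) * nxi M ^ i := by nlinarith
    _ = (M:ℝ) * nxi M ^ (i+j) := by rw [pow_add]; ring
  nlinarith [hkey]

lemma window_bound {M d : ℕ} (hM : 6 ≤ M) {s : ℝ} {i w : ℕ}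
    (hw1 : 1 ≤ w) (hw2 : w ≤ M-1) (hiw : i + w ≤ d-1) (hd1 : 1 ≤ d)
    (hs1 : nxi M ^ (i+1) ≤ s) (hs2 : s ≤ nxi M ^ i) :
    |Ef M d s| ≤ (∏ t ∈ range w, ((1+t:ℝ)/((2*M:ℝ)-(1+t)))) * Bf M d s := by
  have hxn := nxi_nonneg hM
  have hxp := nxi_pos hM
  have hsp : 0 < s := lt_of_lt_of_le (pow_pos hxp (i+1)) hs1
  have hM6 : (6:ℝ) ≤ M := by exact_mod_cast hM
  set f : ℕ → ℝ := fun k => |s - nxi M ^ k| with hf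
  set g : ℕ → ℝ := fun k => s + nxi M ^ k with hg
  have hfg : ∀ k, f k ≤ g k := by
    intro k
    have : (0:ℝ) ≤ nxi M ^ k := pow_nonneg hxn _
    simp only [hf, hg]
    apply abs_le.mpr; constructor <;> linarith
  have hfnn : ∀ k, 0 ≤ f k := fun k => abs_nonneg _
  have hgnn : ∀ k, 0 ≤ g k := fun k => by
    have : (0:ℝ) ≤ nxi M ^ k := pow_nonneg hxn _; simp [hg]; linarith
  set win : Finset ℕ := (range w).image (fun t => i+1+t) with hwin
  have hinj : ∀ a ∈ range w, ∀ b ∈ range w, i+1+a = i+1+b → a = b := by intros; omega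
  have hsub : win ⊆ range d := by
    intro k hk
    simp only [hwin, mem_image, mem_range] at hk
    obtain ⟨t, ht, rfl⟩ := hk
    simp only [mem_range]; omega
  have hEabs : |Ef M d s| = ∏ k ∈ range d, f k := by
    simp only [Ef, hf]; rw [Finset.abs_prod]
  have hsplit : ∀ (h : ℕ → ℝ), ∏ k ∈ range d, h k
      = (∏ k ∈ range d \ win, h k) * ∏ k ∈ win, h k := fun h => (Finset.prod_sdiff hsub).symm
  have hrest : ∏ k ∈ range d \ win, f k ≤ ∏ k ∈ range d \ win, g k :=
    Finset.prod_le_prod (fun k _ => hfnn k) (fun k _ => hfg k)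
  set W : ℝ := ∏ t ∈ range w, ((1+t:ℝ)/((2*M:ℝ)-(1+t))) with hW
  have hcnn : ∀ t ∈ range w, (0:ℝ) ≤ (1+t:ℝ)/((2*M:ℝ)-(1+t)) := by
    intro t ht
    simp only [mem_range] at ht
    have h1 : (0:ℝ) ≤ 1+(t:ℝ) := by positivity
    have h2 : (0:ℝ) < (2*M:ℝ)-(1+t) := by
      have : (t:ℝ) ≤ (w:ℝ) - 1 := by
        have : ((t:ℕ):ℝ) ≤ ((w-1:ℕ):ℝ) := by exact_mod_cast (by omega : t ≤ w-1)
        rwa [Nat.cast_sub (by omega), Nat.cast_one] at this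
      have hwM : (w:ℝ) ≤ (M:ℝ)-1 := by
        have : ((w:ℕ):ℝ) ≤ ((M-1:ℕ):ℝ) := by exact_mod_cast hw2
        rwa [Nat.cast_sub (by omega), Nat.cast_one] at this
      linarith
    positivity
  have hwinprod : ∏ k ∈ win, f k ≤ W * ∏ k ∈ win, g k := by
    rw [hwin, Finset.prod_image hinj, Finset.prod_image hinj, hW, ← Finset.prod_mul_distrib]
    apply Finset.prod_le_prod (fun t _ => hfnn _)
    intro t ht
    simp only [mem_range] at ht
    have hfac := factor_bound hM (show 1 ≤ 1+t by omega) (show 1+t ≤ M-1 by omega) hs1 hs2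
    have he : i + (1+t) = i+1+t := by omega
    rw [he] at hfac
    calc f (i+1+t) ≤ ((1+t:ℕ):ℝ)/((2*M:ℝ)-((1+t:ℕ):ℝ)) * (s + nxi M ^ (i+1+t)) := hfac
    _ = (1+(t:ℝ))/((2*M:ℝ)-(1+(t:ℝ))) * g (i+1+t) := by push_cast; rfl
  have hWnn : 0 ≤ W := Finset.prod_nonneg hcnn
  calc |Ef M d s| = (∏ k ∈ range d \ win, f k) * ∏ k ∈ win, f k := by
        rw [hEabs, hsplit f]
  _ ≤ (∏ k ∈ range d \ win, g k) * (W * ∏ k ∈ win, g k) := by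
      apply mul_le_mul hrest hwinprod (Finset.prod_nonneg (fun k _ => hfnn k))
        (Finset.prod_nonneg (fun k _ => hgnn k))
  _ = W * ((∏ k ∈ range d \ win, g k) * ∏ k ∈ win, g k) := by ring
  _ = W * Bf M d s := by rw [← hsplit g]; rfl

lemma prod_cast_fact (w : ℕ) : ∏ t ∈ range w, ((1+t:ℝ)) = (Nat.factorial w : ℝ) := by
  rw [← Finset.prod_range_add_one_eq_factorial w, Nat.cast_prod]
  apply Finset.prod_congr rfl; intros; push_cast; ring

lemma core {M d : ℕ} (hM : 6 ≤ M) (hd1 : M^2 - 1 ≤ d) (hd2 : d ≤ M^2) (hde : Even d)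
    {s : ℝ} (h0 : 0 ≤ s) (h1 : s ≤ 1) :
    (∏ k ∈ range d, nxi M ^ k) / 2 ≤ Bf M d s + Ef M d s ∧
    |s - s * (Bf M d s - Ef M d s) / (Bf M d s + Ef M d s)| ≤ 1/2^M := by
  have hxn := nxi_nonneg hM
  have hxp := nxi_pos hM
  have hx1 := nxi_le_one hM
  have hM2 : 36 ≤ M^2 := by calc 36 = 6^2 := by norm_num
                               _ ≤ M^2 := Nat.pow_le_pow_left hM 2
  have hdbig : 35 ≤ d := by omega
  set a0 : ℝ := ∏ k ∈ range d, nxi M ^ k with ha0def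
  have ha0 : 0 < a0 := Finset.prod_pos (fun k _ => pow_pos hxp k)
  set B := Bf M d s with hB
  set E := Ef M d s with hE
  have hBpos : 0 < B := Finset.prod_pos (fun k _ => by
    have := pow_pos hxp k; linarith)
  have hBa0 : a0 ≤ B := by
    apply Finset.prod_le_prod (fun k _ => (pow_pos hxp k).le) (fun k _ => by linarith)
  rcases le_or_gt s (nxi M ^ (d-1)) with hsm | hsl
  · -- small region
    have hE0 : 0 ≤ E := by
      have heq : E = ∏ k ∈ range d, (nxi M ^ k - s) := by
        simp only [hE, Ef]
        have : ∀ k ∈ range d, s - nxi M ^ k = (-1) * (nxi M ^ k - s) := by intros; ring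
        rw [Finset.prod_congr rfl this, Finset.prod_mul_distrib, Finset.prod_const,
          card_range, hde.neg_one_pow, one_mul]
      rw [heq]
      apply Finset.prod_nonneg
      intro k hk
      simp only [mem_range] at hk
      have : nxi M ^ (d-1) ≤ nxi M ^ k := pow_le_pow_of_le_one hxn hx1 (by omega)
      linarith
    have hBE : 0 < B + E := by linarith
    constructor
    · linarith
    · have heq : s - s * (B - E) / (B + E) = 2*s*E/(B+E) := by
        field_simp; ring
      rw [heq, abs_of_nonneg (by positivity)]
      have h2s : 2*s*E/(B+E) ≤ 2*s := by
        rw [div_le_iff₀ hBE]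
        nlinarith
      have := N1 (d := d) hM hd1
      linarith
  · -- mid / gap region
    obtain ⟨i, hile, hs1, hs2⟩ := cover (d-2) s (by
      have : (d-2)+1 = d-1 := by omega
      rw [this]; exact hsl.le) h1
    set w := min (M-1) (d-1-i) with hw
    have hw1 : 1 ≤ w := by omega
    have hw2 : w ≤ M-1 := by omega
    have hiw : i + w ≤ d - 1 := by omega
    set W : ℝ := ∏ t ∈ range w, ((1+t:ℝ)/((2*M:ℝ)-(1+t))) with hWdef
    have hEW : |E| ≤ W * B := window_bound hM hw1 hw2 hiw (by omega) hs1 hs2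
    have hWnn : 0 ≤ W := by
      apply Finset.prod_nonneg
      intro t ht
      simp only [mem_range] at ht
      have h2 : (0:ℝ) < (2*M:ℝ)-(1+t) := by
        have ht' : (t:ℝ) < (M:ℝ) - 1 := by
          have : ((t:ℕ):ℝ) < ((M-1:ℕ):ℝ) := by exact_mod_cast lt_of_lt_of_le ht hw2
          rwa [Nat.cast_sub (by omega), Nat.cast_one] at this
        have : (6:ℝ) ≤ M := by exact_mod_cast hM
        linarith
      positivity
    have hMR : (6:ℝ) ≤ M := by exact_mod_cast hM
    have hWfact : W ≤ (Nat.factorial w : ℝ) / (M:ℝ)^w := by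
      have : W ≤ ∏ t ∈ range w, ((1+t:ℝ)/(M:ℝ)) := by
        apply Finset.prod_le_prod
        · intro t ht
          simp only [mem_range] at ht
          have h2 : (0:ℝ) < (2*M:ℝ)-(1+t) := by
            have ht' : (t:ℝ) < (M:ℝ) - 1 := by
              have : ((t:ℕ):ℝ) < ((M-1:ℕ):ℝ) := by exact_mod_cast lt_of_lt_of_le ht hw2
              rwa [Nat.cast_sub (by omega), Nat.cast_one] at this
            linarith
          positivity
        · intro t ht
          simp only [mem_range] at ht
          have ht' : (t:ℝ) < (M:ℝ) - 1 := by
            have : ((t:ℕ):ℝ) < ((M-1:ℕ):ℝ) := by exact_mod_cast lt_of_lt_of_le ht hw2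
            rwa [Nat.cast_sub (by omega), Nat.cast_one] at this
          apply div_le_div_of_nonneg_left (by positivity) (by linarith) (by linarith)
      calc W ≤ ∏ t ∈ range w, ((1+t:ℝ)/(M:ℝ)) := this
      _ = (∏ t ∈ range w, ((1+t:ℝ))) / (M:ℝ)^w := by
          rw [Finset.prod_div_distrib, Finset.prod_const, card_range]
      _ = (Nat.factorial w : ℝ) / (M:ℝ)^w := by rw [prod_cast_fact]
    have hWhalf : W ≤ 1/2 := by
      rcases eq_or_lt_of_le (show w ≤ M-1 from hw2) with hcase | hcase
      · have := N2 hM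
        rw [hWdef, hcase]
        refine le_trans this ?_
        have : (2:ℝ)^(M+2) ≥ 2 := by
          calc (2:ℝ) = 2^1 := by norm_num
          _ ≤ 2^(M+2) := by apply pow_le_pow_right₀ (by norm_num) (by omega)
        rw [div_le_div_iff₀ (by positivity) (by norm_num)]
        nlinarith
      · have hfw : (Nat.factorial w : ℝ) / (M:ℝ)^w ≤ 1/M := by
          have h : (Nat.factorial w : ℝ) ≤ (M:ℝ)^(w-1) := by
            exact_mod_cast fact_le_pow M w hw1 (by omega)
          rw [div_le_div_iff₀ (by positivity) (by linarith)]
          calc (Nat.factorial w : ℝ) * M ≤ (M:ℝ)^(w-1) * M := by nlinarith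
          _ = (M:ℝ)^w := by rw [← pow_succ]; congr 1; omega
          _ = 1 * (M:ℝ)^w := by ring
        refine le_trans hWfact (le_trans hfw ?_)
        rw [div_le_div_iff₀ (by linarith) (by norm_num)]; linarith
    have hWB : W*B ≤ B/2 := by
      have := mul_le_mul_of_nonneg_right hWhalf hBpos.le
      linarith
    have hBE : B/2 ≤ B + E := by
      have h1' : -(W*B) ≤ E := by
        have := neg_abs_le E; linarith
      linarith
    have hBEpos : 0 < B + E := by linarith
    constructor
    · linarith
    · have heq : s - s * (B - E) / (B + E) = 2*s*E/(B+E) := by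
        field_simp; ring
      rw [heq]
      have hsp : 0 < s := lt_of_lt_of_le (pow_pos hxp (i+1)) hs1
      have habs : |2*s*E/(B+E)| = 2*s*|E|/(B+E) := by
        rw [abs_div, abs_of_pos hBEpos, abs_mul, abs_of_pos (by linarith : (0:ℝ) < 2*s)]
      rw [habs]
      have hstep : 2*s*|E|/(B+E) ≤ 4*s*W := by
        have h2s : (0:ℝ) ≤ 2*s := by linarith
        have h1' : 2*s*|E| ≤ 2*s*(W*B) := mul_le_mul_of_nonneg_left hEW h2s
        have hWBnn : (0:ℝ) ≤ 2*s*(W*B) := mul_nonneg h2s (mul_nonneg hWnn hBpos.le)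
        calc 2*s*|E|/(B+E) ≤ 2*s*(W*B)/(B+E) := (div_le_div_iff_of_pos_right hBEpos).mpr h1'
        _ ≤ 2*s*(W*B)/(B/2) := div_le_div_of_nonneg_left hWBnn (by linarith) hBE
        _ = 4*s*W := by field_simp; ring
      rcases eq_or_lt_of_le (show w ≤ M-1 from hw2) with hcase | hcase
      · -- main mid case
        have hN2 := N2 hM
        have hWb : W ≤ 1/2^(M+2) := by rw [hWdef, hcase]; exact hN2
        have : 4*s*W ≤ 4*W := by nlinarith
        have hfin : (4:ℝ)*(1/2^(M+2)) = 1/2^M := by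
          have h4 : (2:ℝ)^(M+2) = 4*2^M := by rw [pow_add]; ring
          rw [h4]
          have : (2:ℝ)^M ≠ 0 := by positivity
          field_simp
        calc 2*s*|E|/(B+E) ≤ 4*s*W := hstep
        _ ≤ 4*W := this
        _ ≤ 4*(1/2^(M+2)) := by linarith
        _ = 1/2^M := hfin
      · -- gap case
        have hwI : w = d-1-i := by omega
        have hieq : i = d-1-w := by omega
        have hN3 := N3 (d := d) hM hd1 hw1 (by omega)
        have hxiw : s ≤ nxi M ^ (d-1-w) := by rw [← hieq]; exact hs2
        have hxinn : 0 ≤ nxi M ^ (d-1-w) := pow_nonneg hxn _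
        calc 2*s*|E|/(B+E) ≤ 4*s*W := hstep
        _ ≤ 4*(nxi M ^ (d-1-w))*W := by nlinarith
        _ ≤ 4*(nxi M ^ (d-1-w))*((Nat.factorial w : ℝ) / (M:ℝ)^w) := by nlinarith
        _ ≤ 1/2^M := hN3

noncomputable def P0 (M d : ℕ) : Polynomial ℝ := ∏ k ∈ range d, (X + C (nxi M ^ k))
noncomputable def P1 (M d : ℕ) : Polynomial ℝ := ∏ k ∈ range d, (X - C (nxi M ^ k))

lemma P0_eval (M d : ℕ) (s : ℝ) : (P0 M d).eval s = Bf M d s := by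
  simp [P0, Bf, eval_prod]

lemma P1_eval (M d : ℕ) (s : ℝ) : (P1 M d).eval s = Ef M d s := by
  simp [P1, Ef, eval_prod]

lemma P0_monic (M d : ℕ) : (P0 M d).Monic :=
  monic_prod_of_monic _ _ (fun k _ => monic_X_add_C _)

lemma P1_monic (M d : ℕ) : (P1 M d).Monic :=
  monic_prod_of_monic _ _ (fun k _ => monic_X_sub_C _)

lemma P0_natDegree (M d : ℕ) : (P0 M d).natDegree = d := by
  rw [P0, natDegree_prod_of_monic _ _ (fun k _ => monic_X_add_C _)]
  simp only [natDegree_X_add_C, Finset.sum_const, card_range, smul_eq_mul, mul_one]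

lemma P1_natDegree (M d : ℕ) : (P1 M d).natDegree = d := by
  rw [P1, natDegree_prod_of_monic _ _ (fun k _ => monic_X_sub_C _)]
  simp only [natDegree_X_sub_C, Finset.sum_const, card_range, smul_eq_mul, mul_one]

-- even extension of core
lemma core' {M d : ℕ} (hM : 6 ≤ M) (hd1 : M^2 - 1 ≤ d) (hd2 : d ≤ M^2) (hde : Even d)
    {s : ℝ} (hs : |s| ≤ 1) :
    (∏ k ∈ range d, nxi M ^ k) / 2 ≤ Bf M d s + Ef M d s ∧
    abs (|s| - s * (Bf M d s - Ef M d s) / (Bf M d s + Ef M d s)) ≤ 1/2^M := by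
  rcases le_or_gt 0 s with h0 | h0
  · have h1 : s ≤ 1 := le_trans (le_abs_self s) hs
    have := core hM hd1 hd2 hde h0 h1
    rwa [abs_of_nonneg h0]
  · set t := -s with ht
    have h0t : 0 ≤ t := by simp [ht]; linarith
    have h1t : t ≤ 1 := by
      have := neg_abs_le s; simp only [ht]; rw [abs_of_neg h0] at hs; linarith
    have hEs : Ef M d s = Bf M d t := by
      simp only [Bf, Ef]
      have h1 : ∀ k ∈ range d, s - nxi M ^ k = (-1) * (t + nxi M ^ k) := by
        intros k _; simp only [ht]; ring
      have h2 : ∀ k ∈ range d, t + nxi M ^ k = (-1) * (s - nxi M ^ k) := by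
        intros k _; simp only [ht]; ring
      rw [Finset.prod_congr rfl h1, Finset.prod_mul_distrib, Finset.prod_const, card_range,
        hde.neg_one_pow, one_mul]
    have hBs' : Bf M d s = Ef M d t := by
      simp only [Bf, Ef]
      have h1 : ∀ k ∈ range d, s + nxi M ^ k = (-1) * (t - nxi M ^ k) := by
        intros k _; simp only [ht]; ring
      rw [Finset.prod_congr rfl h1, Finset.prod_mul_distrib, Finset.prod_const, card_range,
        hde.neg_one_pow, one_mul]
    have hcore := core hM hd1 hd2 hde h0t h1t
    have habs : |s| = t := by rw [abs_of_neg h0]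
    have hsum : Bf M d s + Ef M d s = Bf M d t + Ef M d t := by rw [hBs', hEs]; ring
    have hexpr : s * (Bf M d s - Ef M d s) = t * (Bf M d t - Ef M d t) := by
      rw [hBs', hEs]; simp only [ht]; ring
    constructor
    · rw [hsum]; exact hcore.1
    · rw [habs, hsum, hexpr]; exact hcore.2

/-- Proposition 3.3.5: rational approximation of the absolute value on `[-2^m, 2^m]`. -/
theorem abs_rational_approx (n m : ℕ) (hn : 6 ≤ n) :
    ∃ p q : Polynomial ℝ,
      p.degree ≤ ((n + m) ^ 2 : ℕ) ∧ q.degree ≤ ((n + m) ^ 2 : ℕ) ∧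
      ∀ x ∈ Set.Icc (-(2 : ℝ) ^ m) ((2 : ℝ) ^ m),
        1 ≤ q.eval x ∧ |(|x| - p.eval x / q.eval x)| ≤ (2 : ℝ) ^ (-(n : ℤ)) := by
  set M : ℕ := n + m with hMdef
  have hM : 6 ≤ M := le_trans hn (Nat.le_add_right n m)
  set d : ℕ := 2 * (M^2 / 2) with hddef
  have hM2 : 36 ≤ M^2 := by
    calc 36 = 6^2 := by norm_num
    _ ≤ M^2 := Nat.pow_le_pow_left hM 2
  have hd1 : M^2 - 1 ≤ d := by omega
  have hd2 : d ≤ M^2 := by omega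
  have hde : Even d := ⟨M^2/2, by omega⟩
  set a0 : ℝ := ∏ k ∈ range d, nxi M ^ k with ha0def
  have ha0 : 0 < a0 := Finset.prod_pos (fun k _ => pow_pos (nxi_pos hM) k)
  set u : ℝ := (2:ℝ)^m with hudef
  have hu : 0 < u := by positivity
  set Pm : Polynomial ℝ := X * P0 M d - X * P1 M d with hPmdef
  set Qm : Polynomial ℝ := P0 M d + P1 M d with hQmdef
  set σ : Polynomial ℝ := C u⁻¹ * X with hσdef
  -- degrees
  have hXP0m : (X * P0 M d).Monic := monic_X.mul (P0_monic M d)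
  have hXP1m : (X * P1 M d).Monic := monic_X.mul (P1_monic M d)
  have hndXP0 : (X * P0 M d).natDegree = 1 + d := by
    rw [natDegree_mul X_ne_zero (P0_monic M d).ne_zero, natDegree_X, P0_natDegree]
  have hndXP1 : (X * P1 M d).natDegree = 1 + d := by
    rw [natDegree_mul X_ne_zero (P1_monic M d).ne_zero, natDegree_X, P1_natDegree]
  have hPmnd : Pm.natDegree ≤ d := by
    rcases eq_or_ne Pm 0 with h | h
    · simp [h]
    · have hdeq : (X * P0 M d).degree = (X * P1 M d).degree := by
        rw [degree_eq_natDegree hXP0m.ne_zero, degree_eq_natDegree hXP1m.ne_zero,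
          hndXP0, hndXP1]
      have hlt : Pm.degree < (X * P0 M d).degree :=
        degree_sub_lt hdeq hXP0m.ne_zero (by rw [hXP0m.leadingCoeff, hXP1m.leadingCoeff])
      have hlt2 : Pm.degree < ((1 + d : ℕ) : WithBot ℕ) := by
        rwa [degree_eq_natDegree hXP0m.ne_zero, hndXP0] at hlt
      have := (natDegree_lt_iff_degree_lt h).mpr hlt2
      omega
  have hQmnd : Qm.natDegree ≤ d := by
    apply le_trans (natDegree_add_le _ _)
    rw [P0_natDegree, P1_natDegree]; omega
  have hσnd : σ.natDegree ≤ 1 := by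
    apply le_trans (natDegree_C_mul_le _ _)
    rw [natDegree_X]
  set p : Polynomial ℝ := C (u * (2/a0)) * (Pm.comp σ) with hpdef
  set q : Polynomial ℝ := C (2/a0) * (Qm.comp σ) with hqdef
  have hdegp : p.degree ≤ ((M^2 : ℕ) : WithBot ℕ) := by
    refine le_trans degree_le_natDegree ?_
    have h1 : p.natDegree ≤ M^2 := by
      refine le_trans (natDegree_C_mul_le _ _) (le_trans natDegree_comp_le ?_)
      calc Pm.natDegree * σ.natDegree ≤ d * 1 := Nat.mul_le_mul hPmnd hσnd
      _ ≤ M^2 := by omega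
    exact_mod_cast Nat.cast_le.mpr h1
  have hdegq : q.degree ≤ ((M^2 : ℕ) : WithBot ℕ) := by
    refine le_trans degree_le_natDegree ?_
    have h1 : q.natDegree ≤ M^2 := by
      refine le_trans (natDegree_C_mul_le _ _) (le_trans natDegree_comp_le ?_)
      calc Qm.natDegree * σ.natDegree ≤ d * 1 := Nat.mul_le_mul hQmnd hσnd
      _ ≤ M^2 := by omega
    exact_mod_cast Nat.cast_le.mpr h1
  refine ⟨p, q, hdegp, hdegq, ?_⟩
  intro x hx
  obtain ⟨hx1, hx2⟩ := hx
  set s : ℝ := u⁻¹ * x with hsdef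
  have hxs : x = u * s := by
    rw [hsdef]; field_simp
  have hsabs : |s| ≤ 1 := by
    rw [hsdef, abs_mul, abs_of_pos (by positivity : (0:ℝ) < u⁻¹)]
    rw [inv_mul_le_iff₀ hu, mul_one]
    apply abs_le.mpr ⟨hx1, hx2⟩
  obtain ⟨hcore1, hcore2⟩ := core' hM hd1 hd2 hde hsabs
  set B := Bf M d s with hB
  set E := Ef M d s with hE
  have hQeval : Qm.eval s = B + E := by
    simp [hQmdef, eval_add, P0_eval, P1_eval]; rfl
  have hPeval : Pm.eval s = s * B - s * E := by
    simp [hPmdef, eval_sub, eval_mul, eval_X, P0_eval, P1_eval]; rfl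
  have hQpos : 0 < Qm.eval s := by rw [hQeval]; linarith
  have hσeval : σ.eval x = s := by simp [hσdef, hsdef]
  have hqe : q.eval x = (2/a0) * Qm.eval s := by
    rw [hqdef]; simp [eval_mul, eval_comp, hσeval]
  have hpe : p.eval x = (u * (2/a0)) * Pm.eval s := by
    rw [hpdef]; simp [eval_mul, eval_comp, hσeval]
  constructor
  · rw [hqe, hQeval]
    have h2a : (0:ℝ) < 2/a0 := by positivity
    have := mul_le_mul_of_nonneg_left hcore1 h2a.le
    have heq : (2/a0) * (a0/2) = 1 := by field_simp
    linarith [heq ▸ this]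
  · have hratio : p.eval x / q.eval x = u * (Pm.eval s / Qm.eval s) := by
      rw [hpe, hqe]
      field_simp
    have hPQ : Pm.eval s / Qm.eval s = s * (B - E) / (B + E) := by
      rw [hPeval, hQeval]
      congr 1
      ring
    rw [hratio, hPQ, hxs]
    rw [show |u * s| = u * |s| from by rw [abs_mul, abs_of_pos hu]]
    have hfinal : u * |s| - u * (s * (B-E)/(B+E)) = u * (|s| - s*(B-E)/(B+E)) := by ring
    rw [hfinal, abs_mul, abs_of_pos hu]
    have hbound := hcore2
    have hpow : u * (1/2^M) = (2:ℝ) ^ (-(n:ℤ)) := by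
      rw [zpow_neg, zpow_natCast, hudef, hMdef]
      rw [pow_add]
      field_simp
    calc u * abs (|s| - s*(B-E)/(B+E)) ≤ u * (1/2^M) := by
          apply mul_le_mul_of_nonneg_left hbound hu.le
    _ = (2:ℝ) ^ (-(n:ℤ)) := hpow
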